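/- arXiv:1811.03666 — 2 statements merged into one kernel-verified Lean document; each statement's English description precedes it below -/
import Mathlib

section
/- Let Q be an invertible M×M real matrix such that ReLU(Q h) = Q ReLU(h) for every h ∈ ℝ^M. Then Q is a permuted positive diagonal matrix: there exist a permutation σ of {1,…,M} and positive reals d_1,…,d_M such that Q_{i,j} = d_i if j = σ(i) and Q_{i,j} = 0 otherwise (uniqueness direction of ION for a ReLU layer). -/
open Matrix

/-- Componentwise rectifier on `ℝ^M`. -/
def relu {M : ℕ} (v : Fin M → ℝ) : Fin M → ℝ := fun i => max (v i) 0

/-- **Uniqueness direction of ION for a ReLU layer.** If `Q` is an invertible real `M × M`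
matrix such that `ReLU(Q h) = Q ReLU(h)` for every `h ∈ ℝ^M`, then `Q` is a permuted
positive diagonal matrix: there are a permutation `σ` and positive reals `d i` with
`Q i j = d i` if `j = σ i` and `Q i j = 0` otherwise. -/
theorem ion_relu_layer_unique {M : ℕ} (Q : Matrix (Fin M) (Fin M) ℝ)
    (hQ : IsUnit Q.det)
    (hcomm : ∀ h : Fin M → ℝ, relu (Q.mulVec h) = Q.mulVec (relu h)) :
    ∃ (σ : Equiv.Perm (Fin M)) (d : Fin M → ℝ),
      (∀ i, 0 < d i) ∧ ∀ i j, Q i j = if j = σ i then d i else 0 := by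
  -- Step 1: entries are nonnegative
  have hsingle : ∀ j : Fin M, relu (Pi.single j (1:ℝ)) = Pi.single j 1 := by
    intro j
    funext l
    by_cases h : l = j
    · subst h; simp [relu, Pi.single_eq_same]
    · simp [relu, Pi.single_eq_of_ne h]
  have hmulsingle : ∀ (i j : Fin M), (Q.mulVec (Pi.single j (1:ℝ))) i = Q i j := by
    intro i j
    simp [Matrix.mulVec_single]
  have hnonneg : ∀ i j, 0 ≤ Q i j := by
    intro i j
    have h := congrFun (hcomm (Pi.single j 1)) i
    rw [hsingle] at h
    simp only [relu, hmulsingle] at h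
    have : max (Q i j) 0 = Q i j := h
    rw [max_eq_left_iff] at this
    exact this
  -- Step 2: row uniqueness
  have hrow : ∀ i j k, j ≠ k → Q i j ≠ 0 → Q i k = 0 := by
    intro i j k hjk hne
    have hpos : 0 < Q i j := lt_of_le_of_ne (hnonneg i j) (Ne.symm hne)
    have hrelu : relu (Pi.single j (1:ℝ) - Pi.single k 1) = Pi.single j 1 := by
      funext l
      by_cases h1 : l = j
      · subst h1; simp [relu, Pi.single_eq_same, Pi.single_eq_of_ne hjk]
      · by_cases h2 : l = k
        · subst h2
          simp [relu, Pi.single_eq_same, Pi.single_eq_of_ne (Ne.symm hjk), Pi.single_eq_of_ne h1]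
        · simp [relu, Pi.single_eq_of_ne h1, Pi.single_eq_of_ne h2]
    have h := congrFun (hcomm (Pi.single j 1 - Pi.single k 1)) i
    rw [hrelu] at h
    simp only [relu, Matrix.mulVec_sub, Pi.sub_apply, hmulsingle] at h
    have h' : max (Q i j - Q i k) 0 = Q i j := h
    rcases max_cases (Q i j - Q i k) 0 with ⟨he, _⟩ | ⟨he, _⟩ <;> rw [he] at h' <;> linarith
  -- each row has a nonzero entry, each column has a nonzero entry
  have hdet : Q.det ≠ 0 := hQ.ne_zero
  have hrowne : ∀ i, ∃ j, Q i j ≠ 0 := by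
    intro i
    by_contra hc
    push_neg at hc
    exact hdet (Matrix.det_eq_zero_of_row_eq_zero i hc)
  have hcolne : ∀ j, ∃ i, Q i j ≠ 0 := by
    intro j
    by_contra hc
    push_neg at hc
    exact hdet (Matrix.det_eq_zero_of_column_eq_zero j hc)
  classical
  let f : Fin M → Fin M := fun i => (hrowne i).choose
  have hf : ∀ i, Q i (f i) ≠ 0 := fun i => (hrowne i).choose_spec
  have hfz : ∀ i j, j ≠ f i → Q i j = 0 := by
    intro i j hj
    exact hrow i (f i) j (fun h => hj h.symm) (hf i)
  have hsurj : Function.Surjective f := by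
    intro j
    obtain ⟨i, hi⟩ := hcolne j
    refine ⟨i, ?_⟩
    by_contra hne
    exact hi (hfz i j (fun h => hne h.symm))
  have hbij : Function.Bijective f := Finite.surjective_iff_bijective.mp hsurj
  refine ⟨Equiv.ofBijective f hbij, fun i => Q i (f i), fun i => lt_of_le_of_ne (hnonneg i (f i)) (Ne.symm (hf i)), ?_⟩
  intro i j
  by_cases h : j = f i
  · subst h; simp [Equiv.ofBijective]
  · simp only [Equiv.ofBijective, Equiv.coe_fn_mk]
    simp only [h, ↓reduceIte]
    exact hfz i j h
end

section
/- Let q ∈ ℝ^M be a nonzero vector such that max(⟨q, h⟩, 0) = ⟨q, ReLU(h)⟩ for every h ∈ ℝ^M, where ⟨·,·⟩ is the standard inner product. Then q has exactly one nonzero coordinate, and that coordinate is positive. -/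
/-- If `q ∈ ℝ^M` is nonzero and `max(⟨q, h⟩, 0) = ⟨q, ReLU(h)⟩` for every `h ∈ ℝ^M`,
then `q` has exactly one nonzero coordinate, and that coordinate is positive. -/
theorem relu_row_single_positive {M : ℕ} (q : Fin M → ℝ) (hq : q ≠ 0)
    (hrelu : ∀ h : Fin M → ℝ,
      max (∑ i, q i * h i) 0 = ∑ i, q i * max (h i) 0) :
    ∃ i : Fin M, 0 < q i ∧ ∀ j : Fin M, j ≠ i → q j = 0 := by
  -- every coordinate is nonnegative
  have hnn : ∀ i, 0 ≤ q i := by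
    intro i
    have key := hrelu (fun t => if t = i then 1 else 0)
    have h1 : (∑ t, q t * (if t = i then (1:ℝ) else 0)) = q i := by
      rw [Finset.sum_eq_single i]
      · simp
      · intro b _ hb; simp [hb]
      · simp
    have h2 : (∑ t, q t * max (if t = i then (1:ℝ) else 0) 0) = q i := by
      rw [Finset.sum_eq_single i]
      · simp
      · intro b _ hb; simp [hb]
      · simp
    rw [h1, h2] at key
    exact le_of_max_le_right key.le
  -- there is a positive coordinate
  obtain ⟨i, hi⟩ : ∃ i, q i ≠ 0 := by
    by_contra hc
    push_neg at hc
    exact hq (funext hc)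
  have hipos : 0 < q i := (hnn i).lt_of_ne (Ne.symm hi)
  refine ⟨i, hipos, fun j hj => ?_⟩
  by_contra hjne
  have hjpos : 0 < q j := (hnn j).lt_of_ne (Ne.symm hjne)
  set h : Fin M → ℝ := fun t => if t = i then q j else if t = j then -q i else 0 with hdef
  have hij : j ≠ i := hj
  have hsum : (∑ t, q t * h t) = 0 := by
    have hsub : (∑ t, q t * h t) = ∑ t ∈ ({i, j} : Finset (Fin M)), q t * h t := by
      refine (Finset.sum_subset (Finset.subset_univ _) ?_).symm
      intro t _ ht
      simp only [Finset.mem_insert, Finset.mem_singleton, not_or] at ht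
      simp [hdef, ht.1, ht.2]
    rw [hsub, Finset.sum_pair (Ne.symm hij)]
    simp [hdef, hij]
    ring
  have hsum2 : (∑ t, q t * max (h t) 0) = q i * q j := by
    have hsub : (∑ t, q t * max (h t) 0) = ∑ t ∈ ({i, j} : Finset (Fin M)), q t * max (h t) 0 := by
      refine (Finset.sum_subset (Finset.subset_univ _) ?_).symm
      intro t _ ht
      simp only [Finset.mem_insert, Finset.mem_singleton, not_or] at ht
      simp [hdef, ht.1, ht.2]
    rw [hsub, Finset.sum_pair (Ne.symm hij)]
    have h1 : h i = q j := by simp [hdef]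
    have h2 : h j = -q i := by simp [hdef, hij]
    rw [h1, h2, max_eq_left hjpos.le, max_eq_right (neg_nonpos.mpr hipos.le)]
    ring
  have key := hrelu h
  rw [hsum, hsum2, max_self] at key
  exact absurd key.symm (ne_of_gt (mul_pos hipos hjpos))
end
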